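/- arXiv:1912.08125 — 5 statements merged into one kernel-verified Lean document; each statement's English description precedes it below -/
import Mathlib

section
/- For a ∉ {-1,0,1/2,1,2}, the cubic form F_3(a) = (a-1)x^3 + (2a^2+6a-1)x^2y - 3(a-1)x^2z + (a^2+4a+1)xy^2 + 2(a-1)xz^2 - 2a(a+4)xyz + (a+1)y^3 - 3(a+1)y^2z + 2(a+1)yz^2 vanishes at each of the twelve points P_0,…,P_11. -/
/-- The twelve points of the configuration, as homogeneous coordinate
vectors in `K^3`, depending on a parameter `a`. -/
def pts {K : Type*} [Field K] (a : K) : Fin 12 → Fin 3 → K :=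
  ![![0, 0, 1], ![1, 0, 1], ![2, 0, 1], ![0, 1, 1], ![0, 2, 1],
    ![1, 1, 3/2], ![1, 1, a/2 + 2], ![a + 1, 1, a + 2],
    ![a + 1, 1, 3*a/2 + 2], ![1, 1 - a, 2], ![1, 1 - a, 2 - a/2],
    ![a + 1, 1 - a, a/2 + 2]]

/-- The cubic form `F_3(a)`. -/
def F3 {K : Type*} [Field K] (a x y z : K) : K :=
  (a - 1)*x^3 + (2*a^2 + 6*a - 1)*x^2*y - 3*(a - 1)*x^2*z
    + (a^2 + 4*a + 1)*x*y^2 + 2*(a - 1)*x*z^2 - 2*a*(a + 4)*x*y*z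
    + (a + 1)*y^3 - 3*(a + 1)*y^2*z + 2*(a + 1)*y*z^2

/-- for `a ∉ {-1, 0, 1/2, 1, 2}`, the cubic form `F_3(a)`
vanishes at each of the twelve points `P_0, …, P_11`. -/
theorem stmt3 {K : Type*} [Field K] [CharZero K] (a : K)
    (ha : a ≠ -1 ∧ a ≠ 0 ∧ a ≠ 1/2 ∧ a ≠ 1 ∧ a ≠ 2) :
    ∀ i : Fin 12, F3 a (pts a i 0) (pts a i 1) (pts a i 2) = 0 := by
  intro i
  fin_cases i <;> · show F3 _ _ _ _ = 0; simp [pts, F3]; try ring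
end

section
/- For a ∉ {-1,0,1/2,1,2}, the quartic form F_4(a) = y(3ax - 2az + x - y)(2ax + ay - 2az + 3x + y - 2z)(ax + 2x + 2y - 2z) vanishes at each of the twelve points P_0,…,P_11. -/
/-- The quartic form `F_4(a)`. -/
def F4 {K : Type*} [Field K] (a x y z : K) : K :=
  y * (3*a*x - 2*a*z + x - y) * (2*a*x + a*y - 2*a*z + 3*x + y - 2*z)
    * (a*x + 2*x + 2*y - 2*z)

/-- for `a ∉ {-1, 0, 1/2, 1, 2}`, the quartic form `F_4(a)`
vanishes at each of the twelve points `P_0, …, P_11`. -/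
theorem stmt4 {K : Type*} [Field K] [CharZero K] (a : K)
    (ha : a ≠ -1 ∧ a ≠ 0 ∧ a ≠ 1/2 ∧ a ≠ 1 ∧ a ≠ 2) :
    ∀ i : Fin 12, F4 a (pts a i 0) (pts a i 1) (pts a i 2) = 0 := by
  intro i
  fin_cases i
  · show F4 a (0) (0) (1) = 0
    simp only [F4]; ring
  · show F4 a (1) (0) (1) = 0
    simp only [F4]; ring
  · show F4 a (2) (0) (1) = 0
    simp only [F4]; ring
  · show F4 a (0) (1) (1) = 0
    simp only [F4]; ring
  · show F4 a (0) (2) (1) = 0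
    simp only [F4]; ring
  · show F4 a (1) (1) (3/2) = 0
    simp only [F4]; ring
  · show F4 a (1) (1) (a/2 + 2) = 0
    simp only [F4]; ring
  · show F4 a (a + 1) (1) (a + 2) = 0
    simp only [F4]; ring
  · show F4 a (a + 1) (1) (3*a/2 + 2) = 0
    simp only [F4]; ring
  · show F4 a (1) (1 - a) (2) = 0
    simp only [F4]; ring
  · show F4 a (1) (1 - a) (2 - a/2) = 0
    simp only [F4]; ring
  · show F4 a (a + 1) (1 - a) (a/2 + 2) = 0
    simp only [F4]; ring
end

section
/- Let E = (E_0,…,E_5) be a convergent sextuple in P^3_K. Define R_1 = (E_0+E_3) ∩ (E_1+E_2), R_2 = (E_0+E_5) ∩ (E_1+E_4), R_3 = (E_2+E_5) ∩ (E_3+E_4). Then the three lines R_1+E_4, R_2+E_2, R_3+E_0 meet in a common point. -/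
/-- Two homogeneous coordinate vectors define the same projective point
iff they are proportional. -/
def ProjPtEq {K : Type*} [Field K] {n : ℕ} (u v : Fin n → K) : Prop :=
  ∃ c : K, c ≠ 0 ∧ v = c • u

/-- A convergent sextuple: six points of `ℙ³_K` (given by nonzero coordinate
vectors), all distinct and different from the origin `O = (0,0,0,1)`, such
that the three lines `E₀+E₁`, `E₂+E₃`, `E₄+E₅` meet in a common point, there
are no other collinearities among the six points, and the six points are not
contained in a plane. -/
def IsConvergentSextuple {K : Type*} [Field K] (E : Fin 6 → Fin 4 → K) : Prop :=
  (∀ i, E i ≠ 0) ∧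
  (∀ i, ¬ ProjPtEq (![0, 0, 0, 1] : Fin 4 → K) (E i)) ∧
  (∀ i j : Fin 6, i ≠ j → ¬ ProjPtEq (E i) (E j)) ∧
  (∃ A : Fin 4 → K, A ≠ 0 ∧
    A ∈ Submodule.span K {E 0, E 1} ⊓ Submodule.span K {E 2, E 3} ⊓
      Submodule.span K {E 4, E 5}) ∧
  (∀ i j k : Fin 6, i ≠ j → i ≠ k → j ≠ k →
    LinearIndependent K ![E i, E j, E k]) ∧
  Submodule.span K (Set.range E) = ⊤


private lemma li3aux {K : Type*} [Field K] {u v w : Fin 4 → K}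
    (h : LinearIndependent K ![u, v, w]) {x y z : K}
    (hs : x • u + y • v + z • w = 0) : x = 0 ∧ y = 0 ∧ z = 0 := by
  have h' := Fintype.linearIndependent_iff.mp h ![x, y, z]
    (by simpa [Fin.sum_univ_three] using hs)
  exact ⟨h' 0, h' 1, h' 2⟩

private lemma li4aux {K : Type*} [Field K] {u v w t : Fin 4 → K}
    (h : LinearIndependent K ![u, v, w, t]) {x y z s : K}
    (hs : x • u + y • v + z • w + s • t = 0) :
    x = 0 ∧ y = 0 ∧ z = 0 ∧ s = 0 := by
  have h' := Fintype.linearIndependent_iff.mp h ![x, y, z, s]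
    (by simpa [Fin.sum_univ_four] using hs)
  exact ⟨h' 0, h' 1, h' 2, h' 3⟩

theorem stmt11' {K : Type*} [Field K] [CharZero K]
    (E : Fin 6 → Fin 4 → K)
    (hind : ∀ i j k : Fin 6, i ≠ j → i ≠ k → j ≠ k → LinearIndependent K ![E i, E j, E k])
    (hspan : Submodule.span K (Set.range E) = ⊤)
    (A : Fin 4 → K) (hA0 : A ≠ 0)
    (hA : A ∈ Submodule.span K {E 0, E 1} ⊓ Submodule.span K {E 2, E 3} ⊓
      Submodule.span K {E 4, E 5})
    (R1 R2 R3 : Fin 4 → K)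
    (hR1 : R1 ≠ 0 ∧ R1 ∈ Submodule.span K {E 0, E 3} ⊓
      Submodule.span K {E 1, E 2})
    (hR2 : R2 ≠ 0 ∧ R2 ∈ Submodule.span K {E 0, E 5} ⊓
      Submodule.span K {E 1, E 4})
    (hR3 : R3 ≠ 0 ∧ R3 ∈ Submodule.span K {E 2, E 5} ⊓
      Submodule.span K {E 3, E 4}) :
    ∃ A1 : Fin 4 → K, A1 ≠ 0 ∧
      A1 ∈ Submodule.span K {R1, E 4} ⊓ Submodule.span K {R2, E 2} ⊓
        Submodule.span K {R3, E 0} := by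
  rw [Submodule.mem_inf, Submodule.mem_inf, Submodule.mem_span_pair,
    Submodule.mem_span_pair, Submodule.mem_span_pair] at hA
  obtain ⟨⟨⟨a0, a1, h01⟩, ⟨a2, a3, h23⟩⟩, ⟨a4, a5, h45⟩⟩ := hA
  have h013 := hind 0 1 3 (by decide) (by decide) (by decide)
  have h014 := hind 0 1 4 (by decide) (by decide) (by decide)
  have h145 := hind 1 4 5 (by decide) (by decide) (by decide)
  -- key nonvanishing of scalars
  have ha2 : a2 ≠ 0 := by
    intro h
    subst h
    have heq : a0 • E 0 + a1 • E 1 + (-a3) • E 3 = 0 := by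
      linear_combination (norm := module) h01 - h23
    obtain ⟨z0, z1, z3⟩ := li3aux h013 heq
    apply hA0
    rw [← h23, neg_eq_zero.mp z3]
    simp
  have ha5 : a5 ≠ 0 := by
    intro h
    subst h
    have heq : a0 • E 0 + a1 • E 1 + (-a4) • E 4 = 0 := by
      linear_combination (norm := module) h01 - h45
    obtain ⟨z0, z1, z4⟩ := li3aux h014 heq
    apply hA0
    rw [← h45, neg_eq_zero.mp z4]
    simp
  have ha0 : a0 ≠ 0 := by
    intro h
    subst h
    have heq : a1 • E 1 + (-a4) • E 4 + (-a5) • E 5 = 0 := by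
      linear_combination (norm := module) h01 - h45
    obtain ⟨z1, z4, z5⟩ := li3aux h145 heq
    apply hA0
    rw [← h01, z1]
    simp
  -- expressions for E2 and E5
  have hE2 : a2 • E 2 = a0 • E 0 + a1 • E 1 - a3 • E 3 := by
    linear_combination (norm := module) h23 - h01
  have hE5 : a5 • E 5 = a0 • E 0 + a1 • E 1 - a4 • E 4 := by
    linear_combination (norm := module) h45 - h01
  -- E0, E1, E3, E4 form a basis
  have h4 : LinearIndependent K ![E 0, E 1, E 3, E 4] := by
    apply linearIndependent_of_top_le_span_of_card_eq_finrank _ (by simp)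
    rw [← hspan]
    apply Submodule.span_le.mpr
    rintro x ⟨i, rfl⟩
    set S := Submodule.span K (Set.range ![E 0, E 1, E 3, E 4]) with hS
    have hm : ∀ j : Fin 4, ![E 0, E 1, E 3, E 4] j ∈ S :=
      fun j => Submodule.subset_span ⟨j, rfl⟩
    have h0 : E 0 ∈ S := hm 0
    have h1 : E 1 ∈ S := hm 1
    have h3 : E 3 ∈ S := hm 2
    have h4' : E 4 ∈ S := hm 3
    fin_cases i
    · exact h0
    · exact h1
    · show E 2 ∈ S
      have : E 2 = a2⁻¹ • (a0 • E 0 + a1 • E 1 - a3 • E 3) := by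
        rw [← hE2, smul_smul, inv_mul_cancel₀ ha2, one_smul]
      rw [this]
      exact S.smul_mem _ (S.sub_mem (S.add_mem (S.smul_mem _ h0) (S.smul_mem _ h1))
        (S.smul_mem _ h3))
    · exact h3
    · exact h4'
    · show E 5 ∈ S
      have : E 5 = a5⁻¹ • (a0 • E 0 + a1 • E 1 - a4 • E 4) := by
        rw [← hE5, smul_smul, inv_mul_cancel₀ ha5, one_smul]
      rw [this]
      exact S.smul_mem _ (S.sub_mem (S.add_mem (S.smul_mem _ h0) (S.smul_mem _ h1))
        (S.smul_mem _ h4'))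
  -- analyze R1
  obtain ⟨hR1ne, hR1m⟩ := hR1
  rw [Submodule.mem_inf, Submodule.mem_span_pair, Submodule.mem_span_pair] at hR1m
  obtain ⟨⟨m0, m3, hm03⟩, ⟨m1, m2, hm12⟩⟩ := hR1m
  have hcomb1 : (a2*m0 - a0*m2) • E 0 + (-(a2*m1) - a1*m2) • E 1 +
      (a2*m3 + a3*m2) • E 3 + (0:K) • E 4 = 0 := by
    linear_combination (norm := module) a2 • hm03 - a2 • hm12 + m2 • hE2
  obtain ⟨e0, e1, e3, -⟩ := li4aux h4 hcomb1
  have hm2 : m2 ≠ 0 := by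
    intro h
    subst h
    apply hR1ne
    have h0 : m0 = 0 := by simpa [ha2] using e0
    have h3 : m3 = 0 := by simpa [ha2] using e3
    rw [← hm03, h0, h3]
    simp
  -- analyze R2
  obtain ⟨hR2ne, hR2m⟩ := hR2
  rw [Submodule.mem_inf, Submodule.mem_span_pair, Submodule.mem_span_pair] at hR2m
  obtain ⟨⟨n0, n5, hn05⟩, ⟨n1, n4, hn14⟩⟩ := hR2m
  have hcomb2 : (a5*n0 + a0*n5) • E 0 + (a1*n5 - a5*n1) • E 1 +
      (0:K) • E 3 + (-(a4*n5) - a5*n4) • E 4 = 0 := by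
    linear_combination (norm := module) a5 • hn05 - a5 • hn14 - n5 • hE5
  obtain ⟨f0, f1, -, f4⟩ := li4aux h4 hcomb2
  have hn5 : n5 ≠ 0 := by
    intro h
    subst h
    apply hR2ne
    have h0 : n0 = 0 := by simpa [ha5] using f0
    rw [← hn05, h0]
    simp
  -- analyze R3
  obtain ⟨hR3ne, hR3m⟩ := hR3
  rw [Submodule.mem_inf, Submodule.mem_span_pair, Submodule.mem_span_pair] at hR3m
  obtain ⟨⟨p2, p5, hp25⟩, ⟨p3, p4, hp34⟩⟩ := hR3m
  have hcomb3 : (a0*a5*p2 + a0*a2*p5) • E 0 + (a1*a5*p2 + a1*a2*p5) • E 1 +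
      (-(a3*a5*p2) - a2*a5*p3) • E 3 + (-(a4*a2*p5) - a2*a5*p4) • E 4 = 0 := by
    linear_combination (norm := module) (a2*a5) • hp25 - (a2*a5) • hp34 -
      (a5*p2) • hE2 - (a2*p5) • hE5
  obtain ⟨g0, -, g3, g4⟩ := li4aux h4 hcomb3
  have hp2 : p2 ≠ 0 := by
    intro h
    subst h
    apply hR3ne
    have h5 : p5 = 0 := by simpa [ha0, ha2] using g0
    rw [← hp25, h5]
    simp
  have q3 : a3 * p2 + a2 * p3 = 0 := by
    have h' : a5 * (a3 * p2 + a2 * p3) = 0 := by linear_combination -g3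
    exact (mul_eq_zero.mp h').resolve_left ha5
  have q0 : a5 * p2 + a2 * p5 = 0 := by
    have h' : a0 * (a5 * p2 + a2 * p5) = 0 := by linear_combination g0
    exact (mul_eq_zero.mp h').resolve_left ha0
  have q4 : a4 * p5 + a5 * p4 = 0 := by
    have h' : a2 * (a4 * p5 + a5 * p4) = 0 := by linear_combination -g4
    exact (mul_eq_zero.mp h').resolve_left ha2
  have q5 : a2 * p4 = a4 * p2 := by
    have h' : a5 * (a2 * p4 - a4 * p2) = 0 := by linear_combination a2 * q4 - a4 * q0
    exact sub_eq_zero.mp ((mul_eq_zero.mp h').resolve_left ha5)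
  -- the common point
  refine ⟨a0 • E 0 - a3 • E 3 + a4 • E 4, ?_, ?_⟩
  · intro h
    have heq : a0 • E 0 + (0:K) • E 1 + (-a3) • E 3 + a4 • E 4 = 0 := by
      linear_combination (norm := module) h
    exact ha0 (li4aux h4 heq).1
  · rw [Submodule.mem_inf, Submodule.mem_inf, Submodule.mem_span_pair,
      Submodule.mem_span_pair, Submodule.mem_span_pair]
    refine ⟨⟨⟨a2/m2, a4, ?_⟩, ⟨-(a5/n5), a2, ?_⟩⟩, ⟨a2/p2, a0, ?_⟩⟩
    · rw [← hm03]
      match_scalars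
      · field_simp
        linear_combination e0
      · field_simp
        linear_combination e3
      · ring
    · rw [← hn14, hE2]
      match_scalars
      · field_simp [hn5]
        linear_combination f1
      · field_simp [hn5]
        linear_combination f4
      · ring
      · ring
    · rw [← hp34]
      match_scalars
      · field_simp [hp2]
        linear_combination q3
      · field_simp [hp2]
        linear_combination q5
      · ring

/-- for a convergent sextuple `E`, with
`R₁ = (E₀+E₃) ∩ (E₁+E₂)`, `R₂ = (E₀+E₅) ∩ (E₁+E₄)`,
`R₃ = (E₂+E₅) ∩ (E₃+E₄)`, the three lines `R₁+E₄`, `R₂+E₂`, `R₃+E₀` meet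
in a common point. -/
theorem stmt11 {K : Type*} [Field K] [CharZero K]
    (E : Fin 6 → Fin 4 → K) (hE : IsConvergentSextuple E)
    (R1 R2 R3 : Fin 4 → K)
    (hR1 : R1 ≠ 0 ∧ R1 ∈ Submodule.span K {E 0, E 3} ⊓
      Submodule.span K {E 1, E 2})
    (hR2 : R2 ≠ 0 ∧ R2 ∈ Submodule.span K {E 0, E 5} ⊓
      Submodule.span K {E 1, E 4})
    (hR3 : R3 ≠ 0 ∧ R3 ∈ Submodule.span K {E 2, E 5} ⊓
      Submodule.span K {E 3, E 4}) :
    ∃ A1 : Fin 4 → K, A1 ≠ 0 ∧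
      A1 ∈ Submodule.span K {R1, E 4} ⊓ Submodule.span K {R2, E 2} ⊓
        Submodule.span K {R3, E 0} := by
  obtain ⟨-, -, -, ⟨A, hA0, hA⟩, hind, hspan⟩ := hE
  exact stmt11' E hind hspan A hA0 hA R1 R2 R3 hR1 hR2 hR3
end

section
/- With notation as before, let A be the common point of the lines E_0+E_1, E_2+E_3, E_4+E_5, let A_1 be the common point of R_1+E_4, R_2+E_2, R_3+E_0, and let A_2 be the common point of R_1+E_5, R_2+E_3, R_3+E_1. Then A, A_1, A_2 are collinear. -/
private lemma li3' {K V : Type*} [Field K] [AddCommGroup V] [Module K V]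
    {u v w : V} (h : LinearIndependent K ![u, v, w]) {a b c : K}
    (habc : a • u + b • v + c • w = 0) : a = 0 ∧ b = 0 ∧ c = 0 := by
  have := Fintype.linearIndependent_iff.mp h ![a, b, c] (by
    simpa [Fin.sum_univ_three] using habc)
  exact ⟨this 0, this 1, this 2⟩

private lemma li4' {K V : Type*} [Field K] [AddCommGroup V] [Module K V]
    {u v w x : V} (h : LinearIndependent K ![u, v, w, x]) {a b c d : K}
    (habcd : a • u + b • v + c • w + d • x = 0) :
    a = 0 ∧ b = 0 ∧ c = 0 ∧ d = 0 := by
  have := Fintype.linearIndependent_iff.mp h ![a, b, c, d] (by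
    simpa [Fin.sum_univ_four] using habcd)
  exact ⟨this 0, this 1, this 2, this 3⟩

/-- with `A` the common point of the lines `E₀+E₁`, `E₂+E₃`,
`E₄+E₅`, `A₁` the common point of `R₁+E₄`, `R₂+E₂`, `R₃+E₀`, and `A₂` the
common point of `R₁+E₅`, `R₂+E₃`, `R₃+E₁`, the points `A`, `A₁`, `A₂` are
collinear. -/
theorem stmt12 {K : Type*} [Field K] [CharZero K]
    (E : Fin 6 → Fin 4 → K) (hE : IsConvergentSextuple E)
    (R1 R2 R3 A A1 A2 : Fin 4 → K)
    (hR1 : R1 ≠ 0 ∧ R1 ∈ Submodule.span K {E 0, E 3} ⊓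
      Submodule.span K {E 1, E 2})
    (hR2 : R2 ≠ 0 ∧ R2 ∈ Submodule.span K {E 0, E 5} ⊓
      Submodule.span K {E 1, E 4})
    (hR3 : R3 ≠ 0 ∧ R3 ∈ Submodule.span K {E 2, E 5} ⊓
      Submodule.span K {E 3, E 4})
    (hA : A ≠ 0 ∧ A ∈ Submodule.span K {E 0, E 1} ⊓
      Submodule.span K {E 2, E 3} ⊓ Submodule.span K {E 4, E 5})
    (hA1 : A1 ≠ 0 ∧ A1 ∈ Submodule.span K {R1, E 4} ⊓
      Submodule.span K {R2, E 2} ⊓ Submodule.span K {R3, E 0})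
    (hA2 : A2 ≠ 0 ∧ A2 ∈ Submodule.span K {R1, E 5} ⊓
      Submodule.span K {R2, E 3} ⊓ Submodule.span K {R3, E 1}) :
    ¬ LinearIndependent K ![A, A1, A2] := by
  obtain ⟨-, -, -, -, hT, hSpan⟩ := hE
  obtain ⟨hA0, hAm⟩ := hA
  rw [Submodule.mem_inf, Submodule.mem_inf] at hAm
  obtain ⟨⟨h01, h23⟩, h45⟩ := hAm
  rw [Submodule.mem_span_pair] at h01 h23 h45
  obtain ⟨a0, a1, h01⟩ := h01
  obtain ⟨a2, a3, h23⟩ := h23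
  obtain ⟨a4, a5, h45⟩ := h45
  -- all the aᵢ are nonzero
  have ha0 : a0 ≠ 0 := by
    intro h
    have e : a1 • E 1 + (-a2) • E 2 + (-a3) • E 3 = 0 := by
      linear_combination (norm := module) h01 - h23 - h • E 0
    obtain ⟨h1, -, -⟩ := li3' (hT 1 2 3 (by decide) (by decide) (by decide)) e
    exact hA0 (by rw [← h01, h, h1]; module)
  have ha1 : a1 ≠ 0 := by
    intro h
    have e : a0 • E 0 + (-a2) • E 2 + (-a3) • E 3 = 0 := by
      linear_combination (norm := module) h01 - h23 - h • E 1
    obtain ⟨h1, -, -⟩ := li3' (hT 0 2 3 (by decide) (by decide) (by decide)) e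
    exact hA0 (by rw [← h01, h, h1]; module)
  have ha2 : a2 ≠ 0 := by
    intro h
    have e : a3 • E 3 + (-a0) • E 0 + (-a1) • E 1 = 0 := by
      linear_combination (norm := module) h23 - h01 - h • E 2
    obtain ⟨h1, -, -⟩ := li3' (hT 3 0 1 (by decide) (by decide) (by decide)) e
    exact hA0 (by rw [← h23, h, h1]; module)
  have ha3 : a3 ≠ 0 := by
    intro h
    have e : a2 • E 2 + (-a0) • E 0 + (-a1) • E 1 = 0 := by
      linear_combination (norm := module) h23 - h01 - h • E 3
    obtain ⟨h1, -, -⟩ := li3' (hT 2 0 1 (by decide) (by decide) (by decide)) e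
    exact hA0 (by rw [← h23, h, h1]; module)
  have ha4 : a4 ≠ 0 := by
    intro h
    have e : a5 • E 5 + (-a0) • E 0 + (-a1) • E 1 = 0 := by
      linear_combination (norm := module) h45 - h01 - h • E 4
    obtain ⟨h1, -, -⟩ := li3' (hT 5 0 1 (by decide) (by decide) (by decide)) e
    exact hA0 (by rw [← h45, h, h1]; module)
  have ha5 : a5 ≠ 0 := by
    intro h
    have e : a4 • E 4 + (-a0) • E 0 + (-a1) • E 1 = 0 := by
      linear_combination (norm := module) h45 - h01 - h • E 5
    obtain ⟨h1, -, -⟩ := li3' (hT 4 0 1 (by decide) (by decide) (by decide)) e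
    exact hA0 (by rw [← h45, h, h1]; module)
  have ha35 : a3 * a5 ≠ 0 := mul_ne_zero ha3 ha5
  -- substitution equations
  have hE3 : a3 • E 3 = a0 • E 0 + a1 • E 1 - a2 • E 2 := by
    linear_combination (norm := module) h23 - h01
  have hE5 : a5 • E 5 = a0 • E 0 + a1 • E 1 - a4 • E 4 := by
    linear_combination (norm := module) h45 - h01
  -- E0, E1, E2, E4 form a basis
  have hmem3 : E 3 ∈ Submodule.span K (Set.range ![E 0, E 1, E 2, E 4]) := by
    have : E 3 = a3⁻¹ • (a0 • E 0 + a1 • E 1 - a2 • E 2) := by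
      rw [← hE3, inv_smul_smul₀ ha3]
    rw [this]
    refine Submodule.smul_mem _ _ (sub_mem (add_mem
      (Submodule.smul_mem _ _ (Submodule.subset_span ⟨0, rfl⟩))
      (Submodule.smul_mem _ _ (Submodule.subset_span ⟨1, rfl⟩)))
      (Submodule.smul_mem _ _ (Submodule.subset_span ⟨2, rfl⟩)))
  have hmem5 : E 5 ∈ Submodule.span K (Set.range ![E 0, E 1, E 2, E 4]) := by
    have : E 5 = a5⁻¹ • (a0 • E 0 + a1 • E 1 - a4 • E 4) := by
      rw [← hE5, inv_smul_smul₀ ha5]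
    rw [this]
    refine Submodule.smul_mem _ _ (sub_mem (add_mem
      (Submodule.smul_mem _ _ (Submodule.subset_span ⟨0, rfl⟩))
      (Submodule.smul_mem _ _ (Submodule.subset_span ⟨1, rfl⟩)))
      (Submodule.smul_mem _ _ (Submodule.subset_span ⟨3, rfl⟩)))
  have h4 : LinearIndependent K ![E 0, E 1, E 2, E 4] := by
    refine linearIndependent_of_top_le_span_of_card_eq_finrank ?_ (by
      simp [Module.finrank_fin_fun])
    rw [← hSpan]
    refine Submodule.span_le.mpr ?_
    rintro x ⟨i, rfl⟩
    fin_cases i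
    · exact Submodule.subset_span ⟨0, rfl⟩
    · exact Submodule.subset_span ⟨1, rfl⟩
    · exact Submodule.subset_span ⟨2, rfl⟩
    · exact hmem3
    · exact Submodule.subset_span ⟨3, rfl⟩
    · exact hmem5
  -- R1
  obtain ⟨hR10, hR1m⟩ := hR1
  rw [Submodule.mem_inf] at hR1m
  obtain ⟨hR1a, hR1b⟩ := hR1m
  rw [Submodule.mem_span_pair] at hR1a hR1b
  obtain ⟨p, q, hpq⟩ := hR1a
  obtain ⟨r, s, hrs⟩ := hR1b
  have hcomb1 : (a3*p + q*a0) • E 0 + (q*a1 - a3*r) • E 1 +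
      (-(q*a2) - a3*s) • E 2 + (0:K) • E 4 = 0 := by
    linear_combination (norm := module) a3 • hpq - a3 • hrs - q • hE3
  obtain ⟨-, hc1, hc2, -⟩ := li4' h4 hcomb1
  have HR1 : a3 • R1 = (q*a1) • E 1 + (-(q*a2)) • E 2 := by
    have hr : a3*r = q*a1 := by linear_combination -hc1
    have hs : a3*s = -(q*a2) := by linear_combination -hc2
    calc a3 • R1 = (a3*r) • E 1 + (a3*s) • E 2 := by
          rw [← hrs]; module
      _ = (q*a1) • E 1 + (-(q*a2)) • E 2 := by rw [hr, hs]
  -- R3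
  obtain ⟨hR30, hR3m⟩ := hR3
  rw [Submodule.mem_inf] at hR3m
  obtain ⟨hR3a, hR3b⟩ := hR3m
  rw [Submodule.mem_span_pair] at hR3a hR3b
  obtain ⟨u, v, huv⟩ := hR3a
  obtain ⟨w, x, hwx⟩ := hR3b
  have hcomb3 : (a3*v*a0 - a5*w*a0) • E 0 + (a3*v*a1 - a5*w*a1) • E 1 +
      (a3*a5*u + a5*w*a2) • E 2 + (-(a3*v*a4) - a3*a5*x) • E 4 = 0 := by
    linear_combination (norm := module) (a3*a5) • huv - (a3*a5) • hwx +
      (a5*w) • hE3 - (a3*v) • hE5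
  obtain ⟨-, hd1, hd2, -⟩ := li4' h4 hcomb3
  set t := a3*v with ht
  have hu : a3*a5*u = -(t*a2) := by
    have : a3*v = a5*w := by
      have := sub_eq_zero.mp hd1
      exact mul_left_injective₀ ha1 this
    rw [ht, this]; linear_combination hd2
  have HR3 : (a3*a5) • R3 = (t*a0) • E 0 + (t*a1) • E 1 +
      (-(t*a2)) • E 2 + (-(t*a4)) • E 4 := by
    calc (a3*a5) • R3 = (a3*a5*u) • E 2 + (a3*v) • (a5 • E 5) := by
          rw [← huv]; module
      _ = (a3*a5*u) • E 2 + (a3*v) • (a0 • E 0 + a1 • E 1 - a4 • E 4) := by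
          rw [hE5]
      _ = (t*a0) • E 0 + (t*a1) • E 1 + (a3*a5*u) • E 2 + (-(t*a4)) • E 4 := by
          rw [← ht]; module
      _ = _ := by rw [hu]
  -- A1 from spans {R1, E4} and {R3, E0}
  obtain ⟨hA10, hA1m⟩ := hA1
  rw [Submodule.mem_inf, Submodule.mem_inf] at hA1m
  obtain ⟨⟨hA1a, -⟩, hA1c⟩ := hA1m
  rw [Submodule.mem_span_pair] at hA1a hA1c
  obtain ⟨α, β, hαβ⟩ := hA1a
  obtain ⟨ε, ζ, hεζ⟩ := hA1c
  set D := a5*α*q with hD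
  have hcombA1 : (ε*t*a0 + a3*a5*ζ) • E 0 + (ε*t*a1 - D*a1) • E 1 +
      (-(ε*t*a2) + D*a2) • E 2 + (-(ε*t*a4) - a3*a5*β) • E 4 = 0 := by
    have e1 : (a3*a5) • A1 = D • (a1 • E 1 + (-a2) • E 2) + (a3*a5*β) • E 4 := by
      calc (a3*a5) • A1 = (a5*α) • (a3 • R1) + (a3*a5*β) • E 4 := by
            rw [← hαβ]; module
        _ = _ := by rw [HR1]; module
    have e2 : (a3*a5) • A1 = ε • ((t*a0) • E 0 + (t*a1) • E 1 +
        (-(t*a2)) • E 2 + (-(t*a4)) • E 4) + (a3*a5*ζ) • E 0 := by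
      calc (a3*a5) • A1 = ε • ((a3*a5) • R3) + (a3*a5*ζ) • E 0 := by
            rw [← hεζ]; module
        _ = _ := by rw [HR3]
    linear_combination (norm := module) e1 - e2
  obtain ⟨-, he1, -, he3⟩ := li4' h4 hcombA1
  have hεt : ε*t = D := mul_left_injective₀ ha1 (sub_eq_zero.mp he1)
  have hβ : a3*a5*β = -(D*a4) := by rw [← hεt]; linear_combination -he3
  have HA1 : (a3*a5) • A1 = (D*a1) • E 1 + (-(D*a2)) • E 2 + (-(D*a4)) • E 4 := by
    calc (a3*a5) • A1 = (a5*α) • (a3 • R1) + (a3*a5*β) • E 4 := by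
          rw [← hαβ]; module
      _ = (D*a1) • E 1 + (-(D*a2)) • E 2 + (a3*a5*β) • E 4 := by
          rw [HR1, hD]; module
      _ = _ := by rw [hβ]
  have hDne : D ≠ 0 := by
    intro h
    apply hA10
    have : (a3*a5) • A1 = 0 := by rw [HA1, h]; module
    exact (smul_eq_zero.mp this).resolve_left ha35
  -- A2 from spans {R1, E5} and {R3, E1}
  obtain ⟨hA20, hA2m⟩ := hA2
  rw [Submodule.mem_inf, Submodule.mem_inf] at hA2m
  obtain ⟨⟨hA2a, -⟩, hA2c⟩ := hA2m
  rw [Submodule.mem_span_pair] at hA2a hA2c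
  obtain ⟨α', β', hαβ'⟩ := hA2a
  obtain ⟨ε', ζ', hεζ'⟩ := hA2c
  have e1' : (a3*a5) • A2 = (a5*α'*q) • (a1 • E 1 + (-a2) • E 2) +
      (a3*β') • (a0 • E 0 + a1 • E 1 - a4 • E 4) := by
    calc (a3*a5) • A2 = (a5*α') • (a3 • R1) + (a3*β') • (a5 • E 5) := by
          rw [← hαβ']; module
      _ = _ := by rw [HR1, hE5]; module
  have e2' : (a3*a5) • A2 = ε' • ((t*a0) • E 0 + (t*a1) • E 1 +
      (-(t*a2)) • E 2 + (-(t*a4)) • E 4) + (a3*a5*ζ') • E 1 := by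
    calc (a3*a5) • A2 = ε' • ((a3*a5) • R3) + (a3*a5*ζ') • E 1 := by
          rw [← hεζ']; module
      _ = _ := by rw [HR3]
  have hcombA2 : (ε'*t*a0 - a3*β'*a0) • E 0 +
      (ε'*t*a1 + a3*a5*ζ' - a5*α'*q*a1 - a3*β'*a1) • E 1 +
      (-(ε'*t*a2) + a5*α'*q*a2) • E 2 +
      (-(ε'*t*a4) + a3*β'*a4) • E 4 = 0 := by
    linear_combination (norm := module) e1' - e2'
  obtain ⟨-, -, hf2, hf3⟩ := li4' h4 hcombA2
  set D' := ε'*t with hD'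
  have hα' : a5*α'*q = D' := by
    have : -(ε'*t*a2) + a5*α'*q*a2 = 0 := hf2
    have h2 : (a5*α'*q)*a2 = (ε'*t)*a2 := by linear_combination this
    exact mul_left_injective₀ ha2 h2
  have hβ' : a3*β' = D' := by
    have h2 : (a3*β')*a4 = (ε'*t)*a4 := by linear_combination hf3
    exact mul_left_injective₀ ha4 h2
  have HA2 : (a3*a5) • A2 = (D'*a0) • E 0 + (D'*(2*a1)) • E 1 +
      (-(D'*a2)) • E 2 + (-(D'*a4)) • E 4 := by
    rw [e1', hα', hβ']; module
  have hD'ne : D' ≠ 0 := by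
    intro h
    apply hA20
    have : (a3*a5) • A2 = 0 := by rw [HA2, h]; module
    exact (smul_eq_zero.mp this).resolve_left ha35
  -- conclusion
  intro hLI
  have hsum : ∑ i, (![D*D', D'*(a3*a5), (-D)*(a3*a5)]) i • (![A, A1, A2]) i
      = 0 := by
    have : (D*D') • A + (D'*(a3*a5)) • A1 + ((-D)*(a3*a5)) • A2 = 0 := by
      linear_combination (norm := module) D' • HA1 + (-D) • HA2 -
        (D*D') • h01
    simpa [Fin.sum_univ_three] using this
  have := Fintype.linearIndependent_iff.mp hLI _ hsum 0
  simp only [Matrix.cons_val_zero] at this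
  exact mul_ne_zero hDne hD'ne this
end

section
/- The group generated in PGL(4,K) by M_2 = [[2,2,2,0],[0,-2,0,0],[0,0,-2,0],[0,-2,-3,2]] and N = [[0, 2ε-2, 2ε-4, 0],[0, -4ε+2, 0, 0],[2ε-4, 2ε-2, 0, 0],[-3, -3ε, -3ε, 4ε-2]], where ε^2 - ε + 1 = 0, has order 18 and is isomorphic to S_3 × C_3. -/
open Equiv Matrix

/-- The projective general linear group `PGL(4, K)`:
invertible `4 × 4` matrices modulo scalars. -/
abbrev PGL4 (K : Type*) [Field K] :=
  GL (Fin 4) K ⧸ Subgroup.center (GL (Fin 4) K)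

private abbrev Gp := Equiv.Perm (Fin 3) × Multiplicative (ZMod 3)

private def tbl : Fin 3 → Fin 3 → Fin 3 → Matrix (Fin 4) (Fin 4) (ℤ√(-3)) :=
  ![![![0,
     0,
     0],
    ![!![⟨12, 0⟩, ⟨0, 0⟩, ⟨0, 0⟩, ⟨0, 0⟩; ⟨0, 0⟩, ⟨12, 0⟩, ⟨0, 0⟩, ⟨0, 0⟩; ⟨0, 0⟩, ⟨0, 0⟩, ⟨12, 0⟩, ⟨0, 0⟩; ⟨0, 0⟩, ⟨0, 0⟩, ⟨0, 0⟩, ⟨12, 0⟩],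
     !![⟨-6, 6⟩, ⟨0, 4⟩, ⟨0, 0⟩, ⟨0, 0⟩; ⟨0, 0⟩, ⟨-6, -6⟩, ⟨0, 0⟩, ⟨0, 0⟩; ⟨0, 0⟩, ⟨0, 4⟩, ⟨-6, 6⟩, ⟨0, 0⟩; ⟨0, 6⟩, ⟨0, 6⟩, ⟨0, 12⟩, ⟨-6, -6⟩],
     !![⟨-6, -6⟩, ⟨0, -4⟩, ⟨0, 0⟩, ⟨0, 0⟩; ⟨0, 0⟩, ⟨-6, 6⟩, ⟨0, 0⟩, ⟨0, 0⟩; ⟨0, 0⟩, ⟨0, -4⟩, ⟨-6, -6⟩, ⟨0, 0⟩; ⟨0, -6⟩, ⟨0, -6⟩, ⟨0, -12⟩, ⟨-6, 6⟩]],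
    ![!![⟨12, 0⟩, ⟨12, 0⟩, ⟨12, 0⟩, ⟨0, 0⟩; ⟨0, 0⟩, ⟨-12, 0⟩, ⟨0, 0⟩, ⟨0, 0⟩; ⟨0, 0⟩, ⟨0, 0⟩, ⟨-12, 0⟩, ⟨0, 0⟩; ⟨0, 0⟩, ⟨-12, 0⟩, ⟨-18, 0⟩, ⟨12, 0⟩],
     !![⟨-6, 6⟩, ⟨-6, 2⟩, ⟨-6, 6⟩, ⟨0, 0⟩; ⟨0, 0⟩, ⟨6, 6⟩, ⟨0, 0⟩, ⟨0, 0⟩; ⟨0, 0⟩, ⟨0, -4⟩, ⟨6, -6⟩, ⟨0, 0⟩; ⟨0, 6⟩, ⟨6, 6⟩, ⟨9, 3⟩, ⟨-6, -6⟩],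
     !![⟨-6, -6⟩, ⟨-6, -2⟩, ⟨-6, -6⟩, ⟨0, 0⟩; ⟨0, 0⟩, ⟨6, -6⟩, ⟨0, 0⟩, ⟨0, 0⟩; ⟨0, 0⟩, ⟨0, 4⟩, ⟨6, 6⟩, ⟨0, 0⟩; ⟨0, -6⟩, ⟨6, -6⟩, ⟨9, -3⟩, ⟨-6, 6⟩]]],
   ![![!![⟨0, 0⟩, ⟨0, 0⟩, ⟨-12, 0⟩, ⟨0, 0⟩; ⟨0, 0⟩, ⟨-12, 0⟩, ⟨0, 0⟩, ⟨0, 0⟩; ⟨-12, 0⟩, ⟨0, 0⟩, ⟨0, 0⟩, ⟨0, 0⟩; ⟨-18, 0⟩, ⟨-18, 0⟩, ⟨-18, 0⟩, ⟨12, 0⟩],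
     !![⟨0, 0⟩, ⟨0, -4⟩, ⟨6, -6⟩, ⟨0, 0⟩; ⟨0, 0⟩, ⟨6, 6⟩, ⟨0, 0⟩, ⟨0, 0⟩; ⟨6, -6⟩, ⟨0, -4⟩, ⟨0, 0⟩, ⟨0, 0⟩; ⟨9, -3⟩, ⟨9, 3⟩, ⟨9, 3⟩, ⟨-6, -6⟩],
     !![⟨0, 0⟩, ⟨0, 4⟩, ⟨6, 6⟩, ⟨0, 0⟩; ⟨0, 0⟩, ⟨6, -6⟩, ⟨0, 0⟩, ⟨0, 0⟩; ⟨6, 6⟩, ⟨0, 4⟩, ⟨0, 0⟩, ⟨0, 0⟩; ⟨9, 3⟩, ⟨9, -3⟩, ⟨9, -3⟩, ⟨-6, 6⟩]],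
    ![0,
     0,
     0],
    ![!![⟨0, 0⟩, ⟨0, 0⟩, ⟨12, 0⟩, ⟨0, 0⟩; ⟨0, 0⟩, ⟨12, 0⟩, ⟨0, 0⟩, ⟨0, 0⟩; ⟨-12, 0⟩, ⟨-12, 0⟩, ⟨-12, 0⟩, ⟨0, 0⟩; ⟨-18, 0⟩, ⟨-12, 0⟩, ⟨-18, 0⟩, ⟨12, 0⟩],
     !![⟨0, 0⟩, ⟨0, 4⟩, ⟨-6, 6⟩, ⟨0, 0⟩; ⟨0, 0⟩, ⟨-6, -6⟩, ⟨0, 0⟩, ⟨0, 0⟩; ⟨6, -6⟩, ⟨6, -2⟩, ⟨6, -6⟩, ⟨0, 0⟩; ⟨9, -3⟩, ⟨6, 0⟩, ⟨9, 3⟩, ⟨-6, -6⟩],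
     !![⟨0, 0⟩, ⟨0, -4⟩, ⟨-6, -6⟩, ⟨0, 0⟩; ⟨0, 0⟩, ⟨-6, 6⟩, ⟨0, 0⟩, ⟨0, 0⟩; ⟨6, 6⟩, ⟨6, 2⟩, ⟨6, 6⟩, ⟨0, 0⟩; ⟨9, 3⟩, ⟨6, 0⟩, ⟨9, -3⟩, ⟨-6, 6⟩]]],
   ![![!![⟨-12, 0⟩, ⟨-12, 0⟩, ⟨-12, 0⟩, ⟨0, 0⟩; ⟨0, 0⟩, ⟨12, 0⟩, ⟨0, 0⟩, ⟨0, 0⟩; ⟨12, 0⟩, ⟨0, 0⟩, ⟨0, 0⟩, ⟨0, 0⟩; ⟨0, 0⟩, ⟨-6, 0⟩, ⟨-18, 0⟩, ⟨12, 0⟩],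
     !![⟨6, -6⟩, ⟨6, -2⟩, ⟨6, -6⟩, ⟨0, 0⟩; ⟨0, 0⟩, ⟨-6, -6⟩, ⟨0, 0⟩, ⟨0, 0⟩; ⟨-6, 6⟩, ⟨0, 4⟩, ⟨0, 0⟩, ⟨0, 0⟩; ⟨0, 6⟩, ⟨3, 3⟩, ⟨9, 3⟩, ⟨-6, -6⟩],
     !![⟨6, 6⟩, ⟨6, 2⟩, ⟨6, 6⟩, ⟨0, 0⟩; ⟨0, 0⟩, ⟨-6, 6⟩, ⟨0, 0⟩, ⟨0, 0⟩; ⟨-6, -6⟩, ⟨0, -4⟩, ⟨0, 0⟩, ⟨0, 0⟩; ⟨0, -6⟩, ⟨3, -3⟩, ⟨9, -3⟩, ⟨-6, 6⟩]],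
    ![!![⟨-12, 0⟩, ⟨0, 0⟩, ⟨0, 0⟩, ⟨0, 0⟩; ⟨0, 0⟩, ⟨-12, 0⟩, ⟨0, 0⟩, ⟨0, 0⟩; ⟨12, 0⟩, ⟨12, 0⟩, ⟨12, 0⟩, ⟨0, 0⟩; ⟨0, 0⟩, ⟨-6, 0⟩, ⟨0, 0⟩, ⟨12, 0⟩],
     !![⟨6, -6⟩, ⟨0, -4⟩, ⟨0, 0⟩, ⟨0, 0⟩; ⟨0, 0⟩, ⟨6, 6⟩, ⟨0, 0⟩, ⟨0, 0⟩; ⟨-6, 6⟩, ⟨-6, 2⟩, ⟨-6, 6⟩, ⟨0, 0⟩; ⟨0, 6⟩, ⟨3, 9⟩, ⟨0, 12⟩, ⟨-6, -6⟩],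
     !![⟨6, 6⟩, ⟨0, 4⟩, ⟨0, 0⟩, ⟨0, 0⟩; ⟨0, 0⟩, ⟨6, -6⟩, ⟨0, 0⟩, ⟨0, 0⟩; ⟨-6, -6⟩, ⟨-6, -2⟩, ⟨-6, -6⟩, ⟨0, 0⟩; ⟨0, -6⟩, ⟨3, -9⟩, ⟨0, -12⟩, ⟨-6, 6⟩]],
    ![0,
     0,
     0]]]
  

private def f₀ (g : Gp) : Matrix (Fin 4) (Fin 4) (ℤ√(-3)) :=
  tbl (g.1 0) (g.1 1) (show Fin 3 from Multiplicative.toAdd g.2)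

private def thrd : Fin 3 → Fin 3 → Fin 3 := fun p q => ![![0,2,1], ![2,1,0], ![1,0,2]] p q

private def app (p q x : Fin 3) : Fin 3 := ![p, q, thrd p q] x

set_option maxHeartbeats 4000000 in
private lemma tbl_mul : ∀ p q : Fin 3, p ≠ q → ∀ r s : Fin 3, r ≠ s → ∀ k l : Fin 3,
    ∀ i j : Fin 4,
    (tbl p q k * tbl r s l) i j = 12 * tbl (app p q r) (app p q s) (k + l) i j := by decide

private lemma perm_ne : ∀ σ : Equiv.Perm (Fin 3), σ 0 ≠ σ 1 := by decide

private lemma perm_eval : ∀ σ : Equiv.Perm (Fin 3), ∀ x : Fin 3, σ x = app (σ 0) (σ 1) x := by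
  decide

private lemma f₀_mul (g h : Gp) (i j : Fin 4) :
    (f₀ g * f₀ h) i j = 12 * f₀ (g * h) i j := by
  have h1 := tbl_mul (g.1 0) (g.1 1) (perm_ne g.1) (h.1 0) (h.1 1) (perm_ne h.1)
      (show Fin 3 from Multiplicative.toAdd g.2) (show Fin 3 from Multiplicative.toAdd h.2) i j
  have e0 : (g * h).1 0 = app (g.1 0) (g.1 1) (h.1 0) := by
    rw [Prod.fst_mul, Equiv.Perm.mul_apply, perm_eval]
  have e1 : (g * h).1 1 = app (g.1 0) (g.1 1) (h.1 1) := by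
    rw [Prod.fst_mul, Equiv.Perm.mul_apply, perm_eval]
  have e2 : (show Fin 3 from Multiplicative.toAdd (g * h).2)
      = (show Fin 3 from Multiplicative.toAdd g.2) + (show Fin 3 from Multiplicative.toAdd h.2) :=
    rfl
  rw [f₀, f₀, f₀, e0, e1, e2]
  exact h1

private lemma f₀_one : ∀ i j : Fin 4,
    f₀ (1 : Gp) i j = 12 * (1 : Matrix (Fin 4) (Fin 4) (ℤ√(-3))) i j := by
  intro i j; fin_cases i <;> fin_cases j <;> decide

private lemma f₀_scalar : ∀ g : Gp, (∀ i j : Fin 4, i ≠ j → f₀ g i j = 0) →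
    (∀ i : Fin 4, f₀ g i i = f₀ g 0 0) → g = 1 := by
  letI : ∀ (M : Matrix (Fin 4) (Fin 4) (ℤ√(-3))) (i j : Fin 4) (c : ℤ√(-3)), Decidable (M i j = c) :=
    fun M i j c => instDecidableEqZsqrtd _ _
  decide

section Field

variable {K : Type*} [Field K] [CharZero K]

private lemma root_prop (ε : K) (hε : ε^2 - ε + 1 = 0) :
    (2*ε - 1) * (2*ε - 1) = (-3 : K) := by
  linear_combination (4:K)*hε

private def rho (ε : K) (hε : ε^2 - ε + 1 = 0) : ℤ√(-3) →+* K where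
  toFun z := (z.re : K) + (z.im : K) * (2*ε - 1)
  map_one' := by simp
  map_zero' := by simp
  map_add' a b := by
    push_cast [Zsqrtd.re_add, Zsqrtd.im_add]
    ring
  map_mul' a b := by
    push_cast [Zsqrtd.re_mul, Zsqrtd.im_mul]
    linear_combination (-4 * (a.im : K) * (b.im : K)) * hε

private lemma rho_apply (ε : K) (hε : ε^2 - ε + 1 = 0) (z : ℤ√(-3)) :
    rho ε hε z = (z.re : K) + (z.im : K) * (2*ε - 1) := rfl

private lemma rho_inj (ε : K) (hε : ε^2 - ε + 1 = 0) : Function.Injective (rho ε hε) := by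
  rw [injective_iff_map_eq_zero]
  intro z hz
  obtain ⟨x, y⟩ := z
  have hz' : (x : K) + (y : K) * (2*ε - 1) = 0 := hz
  have key : ((x^2 + 3*y^2 : ℤ) : K) = 0 := by
    push_cast
    linear_combination ((x : K) - (y : K)*(2*ε - 1))*hz' + (y : K)^2 * root_prop ε hε
  have key' : x^2 + 3*y^2 = 0 := by exact_mod_cast key
  have hx : x = 0 := by nlinarith [sq_nonneg x, sq_nonneg y]
  have hy : y = 0 := by nlinarith [sq_nonneg x, sq_nonneg y]
  subst hx; subst hy; rfl

private def Fmon (ε : K) (hε : ε^2 - ε + 1 = 0) : Gp →* Matrix (Fin 4) (Fin 4) K where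
  toFun g := (12:K)⁻¹ • (f₀ g).map (rho ε hε)
  map_one' := by
    show (12:K)⁻¹ • (f₀ (1 : Gp)).map (rho ε hε) = (1 : Matrix (Fin 4) (Fin 4) K)
    ext i j
    rw [Matrix.smul_apply, Matrix.map_apply, f₀_one i j]
    by_cases hij : i = j
    · subst hij
      rw [Matrix.one_apply_eq, Matrix.one_apply_eq, mul_one, map_ofNat, smul_eq_mul]
      norm_num
    · rw [Matrix.one_apply_ne hij, Matrix.one_apply_ne hij, mul_zero, map_zero, smul_zero]
  map_mul' g h := by
    have hmap : (f₀ g).map (rho ε hε) * (f₀ h).map (rho ε hε)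
        = (12:K) • (f₀ (g*h)).map (rho ε hε) := by
      rw [← Matrix.map_mul]
      ext i j
      rw [Matrix.map_apply, f₀_mul g h i j, _root_.map_mul, Matrix.smul_apply, Matrix.map_apply,
        map_ofNat, smul_eq_mul]
    show (12:K)⁻¹ • (f₀ (g*h)).map (rho ε hε)
        = ((12:K)⁻¹ • (f₀ g).map (rho ε hε)) * ((12:K)⁻¹ • (f₀ h).map (rho ε hε))
    rw [smul_mul_assoc, mul_smul_comm, hmap, smul_smul, smul_smul]
    norm_num

private def phi (ε : K) (hε : ε^2 - ε + 1 = 0) : Gp →* PGL4 K :=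
  (QuotientGroup.mk' (Subgroup.center (GL (Fin 4) K))).comp (Fmon ε hε).toHomUnits

private lemma phi_inj (ε : K) (hε : ε^2 - ε + 1 = 0) : Function.Injective (phi ε hε) := by
  rw [injective_iff_map_eq_one]
  intro g hg
  have hc : (Fmon ε hε).toHomUnits g ∈ Subgroup.center (GL (Fin 4) K) := by
    rwa [phi, MonoidHom.comp_apply, QuotientGroup.mk'_apply, QuotientGroup.eq_one_iff] at hg
  have hcomm : ∀ t : Matrix.TransvectionStruct (Fin 4) K,
      Commute t.toMatrix ↑((Fmon ε hε).toHomUnits g) := by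
    intro t
    have h2 := Subgroup.mem_center_iff.mp hc ⟨t.toMatrix, t.inv.toMatrix, t.mul_inv, t.inv_mul⟩
    have h3 := congrArg Units.val h2
    simpa [Units.val_mul, commute_iff_eq] using h3
  obtain ⟨c, hcs⟩ := Matrix.mem_range_scalar_of_commute_transvectionStruct hcomm
  have hv : (12:K)⁻¹ • (f₀ g).map (rho ε hε) = Matrix.scalar (Fin 4) c := hcs.symm
  have he : ∀ i j : Fin 4, (12:K)⁻¹ * rho ε hε (f₀ g i j) = Matrix.scalar (Fin 4) c i j := by
    intro i j
    have h4 := congrFun (congrFun hv i) j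
    simpa [Matrix.smul_apply, Matrix.map_apply, smul_eq_mul] using h4
  have h12 : (12:K)⁻¹ ≠ 0 := by norm_num
  apply f₀_scalar g
  · intro i j hij
    apply rho_inj ε hε
    rw [map_zero]
    have e1 := he i j
    rw [Matrix.scalar_apply, Matrix.diagonal_apply_ne _ hij] at e1
    exact (mul_eq_zero.mp e1).resolve_left h12
  · intro i
    apply rho_inj ε hε
    have e1 := he i i
    have e2 := he 0 0
    rw [Matrix.scalar_apply, Matrix.diagonal_apply_eq] at e1 e2
    exact mul_left_cancel₀ h12 (e1.trans e2.symm)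

set_option synthInstance.maxSize 4000 in
set_option synthInstance.maxHeartbeats 1000000 in
private lemma htop :
    Subgroup.closure ({((Equiv.swap 1 2 : Equiv.Perm (Fin 3)), (1 : Multiplicative (ZMod 3))),
      ((Equiv.swap 0 1 : Equiv.Perm (Fin 3)), Multiplicative.ofAdd (1 : ZMod 3))} : Set Gp) = ⊤ := by
  rw [Subgroup.eq_top_iff']
  intro y
  set a : Gp := ((Equiv.swap 1 2 : Equiv.Perm (Fin 3)), (1 : Multiplicative (ZMod 3))) with hadef
  set b : Gp := ((Equiv.swap 0 1 : Equiv.Perm (Fin 3)), Multiplicative.ofAdd (1 : ZMod 3)) with hbdef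
  have ha : a ∈ Subgroup.closure ({a, b} : Set Gp) := Subgroup.subset_closure (by simp)
  have hb : b ∈ Subgroup.closure ({a, b} : Set Gp) := Subgroup.subset_closure (by simp)
  have key : ∀ z : Gp, z = 1 ∨ z = a ∨ z = b ∨ z = a*b ∨ z = b*a ∨ z = b*b ∨ z = a*b*a ∨
      z = a*b*b ∨ z = b*a*b ∨ z = b*b*b ∨ z = a*b*a*b ∨ z = a*b*b*b ∨ z = b*a*b*a ∨
      z = b*a*b*b ∨ z = b*b*b*b ∨ z = a*b*a*b*a ∨ z = a*b*a*b*b ∨ z = a*b*b*b*b := by decide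
  rcases key y with rfl|rfl|rfl|rfl|rfl|rfl|rfl|rfl|rfl|rfl|rfl|rfl|rfl|rfl|rfl|rfl|rfl|rfl
  · exact one_mem _
  · exact ha
  · exact hb
  · exact mul_mem ha hb
  · exact mul_mem hb ha
  · exact mul_mem hb hb
  · exact mul_mem (mul_mem ha hb) ha
  · exact mul_mem (mul_mem ha hb) hb
  · exact mul_mem (mul_mem hb ha) hb
  · exact mul_mem (mul_mem hb hb) hb
  · exact mul_mem (mul_mem (mul_mem ha hb) ha) hb
  · exact mul_mem (mul_mem (mul_mem ha hb) hb) hb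
  · exact mul_mem (mul_mem (mul_mem hb ha) hb) ha
  · exact mul_mem (mul_mem (mul_mem hb ha) hb) hb
  · exact mul_mem (mul_mem (mul_mem hb hb) hb) hb
  · exact mul_mem (mul_mem (mul_mem (mul_mem ha hb) ha) hb) ha
  · exact mul_mem (mul_mem (mul_mem (mul_mem ha hb) ha) hb) hb
  · exact mul_mem (mul_mem (mul_mem (mul_mem ha hb) hb) hb) hb

private lemma mk_center_eq (u v : GL (Fin 4) K) (c : K)
    (h : (v : Matrix (Fin 4) (Fin 4) K) = c • (u : Matrix (Fin 4) (Fin 4) K)) :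
    (QuotientGroup.mk u : PGL4 K) = QuotientGroup.mk v := by
  rw [QuotientGroup.eq]
  refine Subgroup.mem_center_iff.mpr fun w => ?_
  apply Units.ext
  have hz : ((u⁻¹ : GL (Fin 4) K) : Matrix (Fin 4) (Fin 4) K) * (v : Matrix (Fin 4) (Fin 4) K)
      = c • (1 : Matrix (Fin 4) (Fin 4) K) := by
    rw [h, mul_smul_comm, u.inv_mul]
  show ((w * (u⁻¹ * v) : GL (Fin 4) K) : Matrix (Fin 4) (Fin 4) K)
      = ((u⁻¹ * v * w : GL (Fin 4) K) : Matrix (Fin 4) (Fin 4) K)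
  simp only [Units.val_mul]
  rw [hz, mul_smul_comm, smul_mul_assoc, mul_one, one_mul]

private lemma f₀_g₁ :
    f₀ ((Equiv.swap 1 2 : Equiv.Perm (Fin 3)), (1 : Multiplicative (ZMod 3))) = !![⟨12, 0⟩, ⟨12, 0⟩, ⟨12, 0⟩, ⟨0, 0⟩; ⟨0, 0⟩, ⟨-12, 0⟩, ⟨0, 0⟩, ⟨0, 0⟩; ⟨0, 0⟩, ⟨0, 0⟩, ⟨-12, 0⟩, ⟨0, 0⟩; ⟨0, 0⟩, ⟨-12, 0⟩, ⟨-18, 0⟩, ⟨12, 0⟩] := by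
  decide

private lemma f₀_g₂ :
    f₀ ((Equiv.swap 0 1 : Equiv.Perm (Fin 3)), Multiplicative.ofAdd (1 : ZMod 3)) = !![⟨0, 0⟩, ⟨0, -4⟩, ⟨6, -6⟩, ⟨0, 0⟩; ⟨0, 0⟩, ⟨6, 6⟩, ⟨0, 0⟩, ⟨0, 0⟩; ⟨6, -6⟩, ⟨0, -4⟩, ⟨0, 0⟩, ⟨0, 0⟩; ⟨9, -3⟩, ⟨9, 3⟩, ⟨9, 3⟩, ⟨-6, -6⟩] := by
  decide

private lemma smul_g₂ : ∀ i j : Fin 4,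
    (⟨-3, -1⟩ : ℤ√(-3)) * (!![⟨0, 0⟩, ⟨0, -4⟩, ⟨6, -6⟩, ⟨0, 0⟩; ⟨0, 0⟩, ⟨6, 6⟩, ⟨0, 0⟩, ⟨0, 0⟩; ⟨6, -6⟩, ⟨0, -4⟩, ⟨0, 0⟩, ⟨0, 0⟩; ⟨9, -3⟩, ⟨9, 3⟩, ⟨9, 3⟩, ⟨-6, -6⟩] : Matrix (Fin 4) (Fin 4) (ℤ√(-3))) i j
      = (!![⟨0, 0⟩, ⟨-12, 12⟩, ⟨-36, 12⟩, ⟨0, 0⟩; ⟨0, 0⟩, ⟨0, -24⟩, ⟨0, 0⟩, ⟨0, 0⟩; ⟨-36, 12⟩, ⟨-12, 12⟩, ⟨0, 0⟩, ⟨0, 0⟩; ⟨-36, 0⟩, ⟨-18, -18⟩, ⟨-18, -18⟩, ⟨0, 24⟩] : Matrix (Fin 4) (Fin 4) (ℤ√(-3))) i j := by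
  intro i j; fin_cases i <;> fin_cases j <;> decide

end Field

set_option maxHeartbeats 1600000 in
/-- for `ε` a root of `x² - x + 1`, the subgroup of
`PGL(4, K)` generated by the matrices `M₂` and `N` has order 18 and is
isomorphic to `S₃ × C₃`. -/
theorem stmt18 (K : Type*) [Field K] [CharZero K] (ε : K)
    (hε : ε^2 - ε + 1 = 0) :
    let G : Subgroup (PGL4 K) :=
      Subgroup.closure
        {QuotientGroup.mk (Matrix.GeneralLinearGroup.mkOfDetNeZero
            (!![2, 2, 2, 0; 0, -2, 0, 0; 0, 0, -2, 0; 0, -2, -3, 2] :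
              Matrix (Fin 4) (Fin 4) K)
            (by
              rw [Matrix.det_succ_row_zero]
              simp [Fin.sum_univ_four, Matrix.det_fin_three, Matrix.submatrix])),
          QuotientGroup.mk (Matrix.GeneralLinearGroup.mkOfDetNeZero
            (!![0, 2*ε - 2, 2*ε - 4, 0; 0, -4*ε + 2, 0, 0;
                2*ε - 4, 2*ε - 2, 0, 0; -3, -3*ε, -3*ε, 4*ε - 2] :
              Matrix (Fin 4) (Fin 4) K)
            (by
              rw [Matrix.det_succ_row_zero]
              simp [Fin.sum_univ_four, Matrix.det_fin_three, Matrix.submatrix]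
              simp (config := {decide := true}) [Fin.succAbove]
              refine ⟨fun h => ?_, ⟨fun h => ?_, fun h => ?_⟩, fun h => ?_⟩
              · have h3 : (3:K) = 0 := by
                  linear_combination hε - (ε/2 + 1/2) * h
                norm_num at h3
              · have h3 : (3:K)/4 = 0 := by
                  linear_combination hε - (-ε/4 + 1/8) * h
                norm_num at h3
              · have h3 : (3:K) = 0 := by
                  linear_combination hε - (ε/2 + 1/2) * h
                norm_num at h3
              · have h3 : (3:K)/4 = 0 := by
                  linear_combination hε - (ε/4 - 1/8) * h
                norm_num at h3))}
    Nat.card G = 18 ∧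
      Nonempty (G ≃* Equiv.Perm (Fin 3) × Multiplicative (ZMod 3)) := by
  intro G
  have hval₁ : ((!![2, 2, 2, 0; 0, -2, 0, 0; 0, 0, -2, 0; 0, -2, -3, 2] :
        Matrix (Fin 4) (Fin 4) K))
      = (2:K) • (((Fmon ε hε).toHomUnits
          ((Equiv.swap 1 2 : Equiv.Perm (Fin 3)), (1 : Multiplicative (ZMod 3)))
          : GL (Fin 4) K) : Matrix (Fin 4) (Fin 4) K) := by
    show _ = (2:K) • ((12:K)⁻¹ •
      (f₀ ((Equiv.swap 1 2 : Equiv.Perm (Fin 3)), (1 : Multiplicative (ZMod 3)))).map (rho ε hε))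
    rw [f₀_g₁, smul_smul]
    ext i j
    fin_cases i <;> fin_cases j <;>
      · norm_num [Matrix.smul_apply, Matrix.map_apply, rho_apply]
        try ring
  have hval₂ : ((!![0, 2*ε - 2, 2*ε - 4, 0; 0, -4*ε + 2, 0, 0;
        2*ε - 4, 2*ε - 2, 0, 0; -3, -3*ε, -3*ε, 4*ε - 2] : Matrix (Fin 4) (Fin 4) K))
      = (rho ε hε ⟨-3, -1⟩) • (((Fmon ε hε).toHomUnits
          ((Equiv.swap 0 1 : Equiv.Perm (Fin 3)), Multiplicative.ofAdd (1 : ZMod 3))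
          : GL (Fin 4) K) : Matrix (Fin 4) (Fin 4) K) := by
    show _ = (rho ε hε ⟨-3, -1⟩) • ((12:K)⁻¹ •
      (f₀ ((Equiv.swap 0 1 : Equiv.Perm (Fin 3)), Multiplicative.ofAdd (1 : ZMod 3))).map (rho ε hε))
    rw [f₀_g₂, smul_comm]
    have hsm : (rho ε hε ⟨-3, -1⟩) • (!![⟨0, 0⟩, ⟨0, -4⟩, ⟨6, -6⟩, ⟨0, 0⟩; ⟨0, 0⟩, ⟨6, 6⟩, ⟨0, 0⟩, ⟨0, 0⟩; ⟨6, -6⟩, ⟨0, -4⟩, ⟨0, 0⟩, ⟨0, 0⟩; ⟨9, -3⟩, ⟨9, 3⟩, ⟨9, 3⟩, ⟨-6, -6⟩] : Matrix (Fin 4) (Fin 4) (ℤ√(-3))).map (rho ε hε)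
        = (!![⟨0, 0⟩, ⟨-12, 12⟩, ⟨-36, 12⟩, ⟨0, 0⟩; ⟨0, 0⟩, ⟨0, -24⟩, ⟨0, 0⟩, ⟨0, 0⟩; ⟨-36, 12⟩, ⟨-12, 12⟩, ⟨0, 0⟩, ⟨0, 0⟩; ⟨-36, 0⟩, ⟨-18, -18⟩, ⟨-18, -18⟩, ⟨0, 24⟩] : Matrix (Fin 4) (Fin 4) (ℤ√(-3))).map (rho ε hε) := by
      ext i j
      rw [Matrix.smul_apply, Matrix.map_apply, Matrix.map_apply, smul_eq_mul, ← _root_.map_mul,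
        smul_g₂ i j]
    rw [hsm]
    ext i j
    fin_cases i <;> fin_cases j <;>
      · norm_num [Matrix.smul_apply, Matrix.map_apply, rho_apply]
        try ring
  have h1 : phi ε hε ((Equiv.swap 1 2 : Equiv.Perm (Fin 3)), (1 : Multiplicative (ZMod 3)))
      = QuotientGroup.mk (Matrix.GeneralLinearGroup.mkOfDetNeZero
          (!![2, 2, 2, 0; 0, -2, 0, 0; 0, 0, -2, 0; 0, -2, -3, 2] : Matrix (Fin 4) (Fin 4) K)
          (by
              rw [Matrix.det_succ_row_zero]
              simp [Fin.sum_univ_four, Matrix.det_fin_three, Matrix.submatrix])) :=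
    mk_center_eq ((Fmon ε hε).toHomUnits
        ((Equiv.swap 1 2 : Equiv.Perm (Fin 3)), (1 : Multiplicative (ZMod 3))))
      (Matrix.GeneralLinearGroup.mkOfDetNeZero
        (!![2, 2, 2, 0; 0, -2, 0, 0; 0, 0, -2, 0; 0, -2, -3, 2] : Matrix (Fin 4) (Fin 4) K)
        (by
          rw [Matrix.det_succ_row_zero]
          simp [Fin.sum_univ_four, Matrix.det_fin_three, Matrix.submatrix]))
      (2:K) hval₁
  have h2 : phi ε hε ((Equiv.swap 0 1 : Equiv.Perm (Fin 3)), Multiplicative.ofAdd (1 : ZMod 3))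
      = QuotientGroup.mk (Matrix.GeneralLinearGroup.mkOfDetNeZero
          (!![0, 2*ε - 2, 2*ε - 4, 0; 0, -4*ε + 2, 0, 0;
              2*ε - 4, 2*ε - 2, 0, 0; -3, -3*ε, -3*ε, 4*ε - 2] : Matrix (Fin 4) (Fin 4) K)
          (by
            rw [Matrix.det_succ_row_zero]
            simp [Fin.sum_univ_four, Matrix.det_fin_three, Matrix.submatrix]
            simp (config := {decide := true}) [Fin.succAbove]
            refine ⟨fun h => ?_, ⟨fun h => ?_, fun h => ?_⟩, fun h => ?_⟩
            · have h3 : (3:K) = 0 := by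
                linear_combination hε - (ε/2 + 1/2) * h
              norm_num at h3
            · have h3 : (3:K)/4 = 0 := by
                linear_combination hε - (-ε/4 + 1/8) * h
              norm_num at h3
            · have h3 : (3:K) = 0 := by
                linear_combination hε - (ε/2 + 1/2) * h
              norm_num at h3
            · have h3 : (3:K)/4 = 0 := by
                linear_combination hε - (ε/4 - 1/8) * h
              norm_num at h3)) :=
    mk_center_eq ((Fmon ε hε).toHomUnits
        ((Equiv.swap 0 1 : Equiv.Perm (Fin 3)), Multiplicative.ofAdd (1 : ZMod 3)))
      (Matrix.GeneralLinearGroup.mkOfDetNeZero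
        (!![0, 2*ε - 2, 2*ε - 4, 0; 0, -4*ε + 2, 0, 0;
            2*ε - 4, 2*ε - 2, 0, 0; -3, -3*ε, -3*ε, 4*ε - 2] : Matrix (Fin 4) (Fin 4) K)
        (by
          rw [Matrix.det_succ_row_zero]
          simp [Fin.sum_univ_four, Matrix.det_fin_three, Matrix.submatrix]
          simp (config := {decide := true}) [Fin.succAbove]
          refine ⟨fun h => ?_, ⟨fun h => ?_, fun h => ?_⟩, fun h => ?_⟩
          · have h3 : (3:K) = 0 := by
              linear_combination hε - (ε/2 + 1/2) * h
            norm_num at h3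
          · have h3 : (3:K)/4 = 0 := by
              linear_combination hε - (-ε/4 + 1/8) * h
            norm_num at h3
          · have h3 : (3:K) = 0 := by
              linear_combination hε - (ε/2 + 1/2) * h
            norm_num at h3
          · have h3 : (3:K)/4 = 0 := by
              linear_combination hε - (ε/4 - 1/8) * h
            norm_num at h3))
      (rho ε hε ⟨-3, -1⟩) hval₂
  have hG : (phi ε hε).range = G := by
    rw [MonoidHom.range_eq_map, ← htop, MonoidHom.map_closure, Set.image_insert_eq,
      Set.image_singleton, h1, h2]
  have e := MonoidHom.ofInjective (phi_inj ε hε)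
  constructor
  · rw [← hG, ← Nat.card_congr e.toEquiv, Nat.card_eq_fintype_card]
    decide
  · exact ⟨(MulEquiv.subgroupCongr hG.symm).trans e.symm⟩
end
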